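/- arXiv:2010.03698 — 5 statements merged into one kernel-verified Lean document; each statement's English description precedes it below -/
import Mathlib

section
/- Let ξ > 0 be real, N ≥ 2 an integer, b ≥ 0 an integer, and define f_{d,l} = exp((2b+1)(d²+d)ξ/(2N)) · 2·sinh((2d+1)ξ/(2N)) · ∏_{k=1}^{l} 4·sinh((2d+1+k)ξ/(2N))·sinh((2d+1−k)ξ/(2N)). Then for all integers d, l with 1 ≤ d ≤ N−1 and 0 ≤ l ≤ 2d−2, one has f_{d,l} > f_{d−1,l}. -/
noncomputable def arcosh (x : ℝ) : ℝ := Real.log (x + Real.sqrt (x^2 - 1))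

noncomputable def kappa : ℝ := arcosh (3/2) / 2

noncomputable def f (ξ : ℝ) (b N d l : ℕ) : ℝ :=
  Real.exp ((2*(b:ℝ)+1) * ((d:ℝ)^2 + (d:ℝ)) * ξ / (2*(N:ℝ))) *
    (2 * Real.sinh ((2*(d:ℝ)+1) * ξ / (2*(N:ℝ)))) *
  ∏ k ∈ Finset.Icc 1 l,
    (4 * Real.sinh ((2*(d:ℝ)+1+(k:ℝ)) * ξ / (2*(N:ℝ))) *
       Real.sinh ((2*(d:ℝ)+1-(k:ℝ)) * ξ / (2*(N:ℝ))))

theorem stmt1 (ξ : ℝ) (hξ : 0 < ξ) (N b : ℕ) (hN : 2 ≤ N) (d l : ℕ)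
    (hd1 : 1 ≤ d) (hd2 : d ≤ N - 1) (hl : l ≤ 2*d - 2) :
    f ξ b N (d-1) l < f ξ b N d l := by
  have hd1' : (1:ℝ) ≤ (d:ℝ) := by exact_mod_cast hd1
  have hD : ((d-1:ℕ):ℝ) = (d:ℝ) - 1 := by rw [Nat.cast_sub hd1]; norm_num
  have hN0 : (0:ℝ) < (N:ℝ) := by
    have : (0:ℕ) < N := by omega
    exact_mod_cast this
  have hc : 0 < ξ / (2*(N:ℝ)) := by positivity
  have harg : ∀ k ∈ Finset.Icc 1 l, (k:ℝ) ≤ 2*(d:ℝ) - 2 := by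
    intro k hk
    have hk' : k ≤ 2*d - 2 := le_trans (Finset.mem_Icc.mp hk).2 hl
    have : (k:ℕ) + 2 ≤ 2*d := by omega
    have := (Nat.cast_le (α := ℝ)).mpr this
    push_cast at this; linarith
  unfold f
  rw [hD]
  have key : ∀ x y : ℝ, 0 < x → x < y →
      Real.sinh (x * ξ / (2*(N:ℝ))) < Real.sinh (y * ξ / (2*(N:ℝ))) := by
    intro x y hx hxy
    apply Real.sinh_lt_sinh.mpr
    rw [div_lt_div_iff₀ (by positivity) (by positivity)]
    nlinarith [mul_pos (mul_pos (sub_pos.mpr hxy) hξ) hN0]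
  have spos : ∀ x : ℝ, 0 < x → 0 < Real.sinh (x * ξ / (2*(N:ℝ))) := by
    intro x hx
    exact Real.sinh_pos_iff.mpr (by positivity)
  apply mul_lt_mul
  · apply mul_lt_mul'
    · apply le_of_lt
      apply Real.exp_lt_exp.mpr
      rw [div_lt_div_iff₀ (by positivity) (by positivity)]
      nlinarith [mul_pos (mul_pos (mul_pos (show (0:ℝ) < 2*(b:ℝ)+1 by positivity) (show (0:ℝ) < 2*(d:ℝ) by linarith)) hξ) hN0]
    · have := key (2*((d:ℝ)-1)+1) (2*(d:ℝ)+1) (by linarith) (by linarith)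
      linarith
    · have := spos (2*((d:ℝ)-1)+1) (by linarith)
      positivity
    · positivity
  · apply Finset.prod_le_prod
    · intro k hk
      have h1 := spos (2*((d:ℝ)-1)+1+(k:ℝ)) (by have := (harg k hk); have hk0 : (0:ℝ) ≤ k := Nat.cast_nonneg k; linarith)
      have h2 : (0:ℝ) < 2*((d:ℝ)-1)+1-(k:ℝ) := by
        have := harg k hk; linarith
      have h3 := spos _ h2
      positivity
    · intro k hk
      have hk2 := harg k hk
      have h2 : (0:ℝ) < 2*((d:ℝ)-1)+1-(k:ℝ) := by linarith
      have hk0 : (0:ℝ) ≤ (k:ℝ) := Nat.cast_nonneg k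
      have h1 : (0:ℝ) < 2*((d:ℝ)-1)+1+(k:ℝ) := by linarith
      have s1 := key _ _ h1 (show 2*((d:ℝ)-1)+1+(k:ℝ) < 2*(d:ℝ)+1+(k:ℝ) by linarith)
      have s2 := key _ _ h2 (show 2*((d:ℝ)-1)+1-(k:ℝ) < 2*(d:ℝ)+1-(k:ℝ) by linarith)
      have p1 := spos _ h1
      have p2 := spos _ h2
      nlinarith
  · apply Finset.prod_pos
    intro k hk
    have hk2 := harg k hk
    have h2 : (0:ℝ) < 2*((d:ℝ)-1)+1-(k:ℝ) := by linarith
    have hk0 : (0:ℝ) ≤ (k:ℝ) := Nat.cast_nonneg k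
    have h1 : (0:ℝ) < 2*((d:ℝ)-1)+1+(k:ℝ) := by linarith
    have p1 := spos _ h1
    have p2 := spos _ h2
    positivity
  · have := spos (2*(d:ℝ)+1) (by linarith)
    positivity
end

section
/- Let ξ > 0 be real, N ≥ 2, b ≥ 0 integers, and f_{d,l} as above. Then f_{N−1,l}/f_{N−2,l} > e^{ξ/2} for every l with 0 ≤ l ≤ 2(N−2)−2 ≤ 2N−2 where both terms are defined. In particular f_{N−1,l} > e^{ξ/2}·f_{N−2,l}. -/
lemma aux_pos (ξ : ℝ) (hξ : 0 < ξ) (b m l : ℕ) (hl : l ≤ 2*m - 2) :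
    0 < f ξ b (m+2) m l := by
  have hden : (0:ℝ) < 2 * ((m:ℝ)+2) := by positivity
  unfold f
  push_cast
  apply mul_pos
  · apply mul_pos (Real.exp_pos _)
    have : (0:ℝ) < (2*(m:ℝ)+1) * ξ / (2*((m:ℝ)+2)) := by positivity
    have := Real.sinh_pos_iff.mpr this
    linarith
  · apply Finset.prod_pos
    intro k hk
    simp only [Finset.mem_Icc] at hk
    have hk1 : 1 ≤ k := hk.1
    have hk2 : k + 2 ≤ 2*m := by omega
    have hk1' : (1:ℝ) ≤ (k:ℝ) := by exact_mod_cast hk1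
    have hk2' : (k:ℝ) + 2 ≤ 2*(m:ℝ) := by exact_mod_cast hk2
    have h1 : (0:ℝ) < (2*(m:ℝ)+1+(k:ℝ)) * ξ / (2*((m:ℝ)+2)) := by
      apply div_pos _ hden
      apply mul_pos _ hξ
      linarith
    have h2 : (0:ℝ) < (2*(m:ℝ)+1-(k:ℝ)) * ξ / (2*((m:ℝ)+2)) := by
      apply div_pos _ hden
      apply mul_pos _ hξ
      linarith
    have s1 := Real.sinh_pos_iff.mpr h1
    have s2 := Real.sinh_pos_iff.mpr h2
    positivity

set_option maxHeartbeats 1600000 in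
lemma aux_lt (ξ : ℝ) (hξ : 0 < ξ) (b m l : ℕ) (hl : l ≤ 2*m - 2) :
    Real.exp (ξ/2) * f ξ b (m+2) m l < f ξ b (m+2) (m+1) l := by
  have hden : (0:ℝ) < 2 * ((m:ℝ)+2) := by positivity
  have hb : (0:ℝ) ≤ (b:ℝ) := Nat.cast_nonneg b
  have hm : (0:ℝ) ≤ (m:ℝ) := Nat.cast_nonneg m
  unfold f
  push_cast
  set E2 := Real.exp ((2*(b:ℝ)+1) * ((m:ℝ)^2 + (m:ℝ)) * ξ / (2*((m:ℝ)+2))) with hE2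
  set E1 := Real.exp ((2*(b:ℝ)+1) * (((m:ℝ)+1)^2 + ((m:ℝ)+1)) * ξ / (2*((m:ℝ)+2))) with hE1
  set S2 := 2 * Real.sinh ((2*(m:ℝ)+1) * ξ / (2*((m:ℝ)+2))) with hS2
  set S1 := 2 * Real.sinh ((2*((m:ℝ)+1)+1) * ξ / (2*((m:ℝ)+2))) with hS1
  set P2 := ∏ k ∈ Finset.Icc 1 l,
    (4 * Real.sinh ((2*(m:ℝ)+1+(k:ℝ)) * ξ / (2*((m:ℝ)+2))) *
       Real.sinh ((2*(m:ℝ)+1-(k:ℝ)) * ξ / (2*((m:ℝ)+2)))) with hP2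
  set P1 := ∏ k ∈ Finset.Icc 1 l,
    (4 * Real.sinh ((2*((m:ℝ)+1)+1+(k:ℝ)) * ξ / (2*((m:ℝ)+2))) *
       Real.sinh ((2*((m:ℝ)+1)+1-(k:ℝ)) * ξ / (2*((m:ℝ)+2)))) with hP1
  have hE : Real.exp (ξ/2) * E2 ≤ E1 := by
    rw [hE1, hE2, ← Real.exp_add]
    apply Real.exp_le_exp.mpr
    rw [div_add_div _ _ (two_ne_zero) hden.ne', div_le_div_iff₀ (by positivity) hden]
    nlinarith [mul_nonneg (mul_nonneg hb hm) hξ.le, mul_nonneg hb hξ.le,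
      mul_nonneg hm hξ.le]
  have hS2pos : 0 < S2 := by
    rw [hS2]
    have : (0:ℝ) < (2*(m:ℝ)+1) * ξ / (2*((m:ℝ)+2)) := by positivity
    have := Real.sinh_pos_iff.mpr this
    linarith
  have hS : S2 < S1 := by
    rw [hS1, hS2]
    have : (2*(m:ℝ)+1) * ξ / (2*((m:ℝ)+2)) < (2*((m:ℝ)+1)+1) * ξ / (2*((m:ℝ)+2)) := by
      apply div_lt_div_of_pos_right _ hden
      nlinarith
    have := Real.sinh_lt_sinh.mpr this
    linarith
  have hS1pos : 0 < S1 := hS2pos.trans hS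
  have hP2pos : 0 < P2 := by
    rw [hP2]
    apply Finset.prod_pos
    intro k hk
    simp only [Finset.mem_Icc] at hk
    have hk2 : k + 2 ≤ 2*m := by omega
    have hk1' : (1:ℝ) ≤ (k:ℝ) := by exact_mod_cast hk.1
    have hk2' : (k:ℝ) + 2 ≤ 2*(m:ℝ) := by exact_mod_cast hk2
    have h1 : (0:ℝ) < (2*(m:ℝ)+1+(k:ℝ)) * ξ / (2*((m:ℝ)+2)) := by
      apply div_pos (mul_pos (by linarith) hξ) hden
    have h2 : (0:ℝ) < (2*(m:ℝ)+1-(k:ℝ)) * ξ / (2*((m:ℝ)+2)) := by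
      apply div_pos (mul_pos (by linarith) hξ) hden
    have s1 := Real.sinh_pos_iff.mpr h1
    have s2 := Real.sinh_pos_iff.mpr h2
    positivity
  have hP : P2 ≤ P1 := by
    rw [hP1, hP2]
    apply Finset.prod_le_prod
    · intro k hk
      simp only [Finset.mem_Icc] at hk
      have hk2 : k + 2 ≤ 2*m := by omega
      have hk1' : (1:ℝ) ≤ (k:ℝ) := by exact_mod_cast hk.1
      have hk2' : (k:ℝ) + 2 ≤ 2*(m:ℝ) := by exact_mod_cast hk2
      have s1 := Real.sinh_pos_iff.mpr
        (div_pos (mul_pos (by linarith : (0:ℝ) < 2*(m:ℝ)+1+(k:ℝ)) hξ) hden)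
      have s2 := Real.sinh_pos_iff.mpr
        (div_pos (mul_pos (by linarith : (0:ℝ) < 2*(m:ℝ)+1-(k:ℝ)) hξ) hden)
      positivity
    · intro k hk
      simp only [Finset.mem_Icc] at hk
      have hk2 : k + 2 ≤ 2*m := by omega
      have hk1' : (1:ℝ) ≤ (k:ℝ) := by exact_mod_cast hk.1
      have hk2' : (k:ℝ) + 2 ≤ 2*(m:ℝ) := by exact_mod_cast hk2
      have s2pos := Real.sinh_pos_iff.mpr
        (div_pos (mul_pos (by linarith : (0:ℝ) < 2*(m:ℝ)+1-(k:ℝ)) hξ) hden)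
      have s1pos := Real.sinh_pos_iff.mpr
        (div_pos (mul_pos (by linarith : (0:ℝ) < 2*(m:ℝ)+1+(k:ℝ)) hξ) hden)
      have m1 : Real.sinh ((2*(m:ℝ)+1+(k:ℝ)) * ξ / (2*((m:ℝ)+2))) ≤
          Real.sinh ((2*((m:ℝ)+1)+1+(k:ℝ)) * ξ / (2*((m:ℝ)+2))) := by
        apply Real.sinh_le_sinh.mpr
        apply div_le_div_of_nonneg_right _ hden.le
        nlinarith [hξ.le]
      have m2 : Real.sinh ((2*(m:ℝ)+1-(k:ℝ)) * ξ / (2*((m:ℝ)+2))) ≤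
          Real.sinh ((2*((m:ℝ)+1)+1-(k:ℝ)) * ξ / (2*((m:ℝ)+2))) := by
        apply Real.sinh_le_sinh.mpr
        apply div_le_div_of_nonneg_right _ hden.le
        nlinarith [hξ.le]
      have s1pos' : (0:ℝ) ≤ Real.sinh ((2*((m:ℝ)+1)+1+(k:ℝ)) * ξ / (2*((m:ℝ)+2))) :=
        le_trans s1pos.le m1
      exact mul_le_mul (by linarith) m2 s2pos.le (by linarith)
  calc Real.exp (ξ/2) * (E2 * S2 * P2) = (Real.exp (ξ/2) * E2) * S2 * P2 := by ring
    _ ≤ E1 * S2 * P2 := by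
        apply mul_le_mul_of_nonneg_right _ hP2pos.le
        exact mul_le_mul_of_nonneg_right hE hS2pos.le
    _ < E1 * S1 * P2 := by
        apply mul_lt_mul_of_pos_right _ hP2pos
        exact mul_lt_mul_of_pos_left hS (Real.exp_pos _)
    _ ≤ E1 * S1 * P1 :=
        mul_le_mul_of_nonneg_left hP (mul_pos (Real.exp_pos _) hS1pos).le

theorem stmt2 (ξ : ℝ) (hξ : 0 < ξ) (N b : ℕ) (hN : 2 ≤ N) (l : ℕ)
    (hl : l ≤ 2*(N-2) - 2) :
    Real.exp (ξ/2) < f ξ b N (N-1) l / f ξ b N (N-2) l ∧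
    Real.exp (ξ/2) * f ξ b N (N-2) l < f ξ b N (N-1) l := by
  obtain ⟨m, rfl⟩ : ∃ m, N = m + 2 := ⟨N - 2, by omega⟩
  have e1 : m + 2 - 1 = m + 1 := rfl
  have e2 : m + 2 - 2 = m := rfl
  rw [e1, e2]
  have hl' : l ≤ 2*m - 2 := by omega
  have hpos := aux_pos ξ hξ b m l hl'
  have hlt := aux_lt ξ hξ b m l hl'
  refine ⟨?_, hlt⟩
  rw [lt_div_iff₀ hpos]
  linarith
end

section
/- Let ξ > 0, N ≥ 2, 1 ≤ l ≤ 2N−2, and f_{N−1,l} as above. If cosh(lξ/N) ≥ cosh(2ξ) − 1/2, then f_{N−1,l−1} > f_{N−1,l}. -/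
lemma sinh_prod_eq (A B : ℝ) :
    4 * Real.sinh A * Real.sinh B = 2 * (Real.cosh (A+B) - Real.cosh (A-B)) := by
  rw [Real.cosh_add, Real.cosh_sub]; ring

theorem stmt4 (ξ : ℝ) (hξ : 0 < ξ) (N b : ℕ) (hN : 2 ≤ N) (l : ℕ)
    (hl1 : 1 ≤ l) (hl2 : l ≤ 2*N - 2)
    (h : Real.cosh ((l:ℝ) * ξ / (N:ℝ)) ≥ Real.cosh (2*ξ) - 1/2) :
    f ξ b N (N-1) l < f ξ b N (N-1) (l-1) := by
  obtain ⟨m, rfl⟩ : ∃ m, l = m + 1 := ⟨l - 1, by omega⟩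
  simp only [Nat.add_sub_cancel]
  have hn2 : (2:ℝ) ≤ (N:ℝ) := by exact_mod_cast hN
  have hn0 : (0:ℝ) < (N:ℝ) := by linarith
  have hd : ((N-1:ℕ):ℝ) = (N:ℝ) - 1 := by
    rw [Nat.cast_sub (by omega)]; simp
  unfold f
  rw [hd, Finset.prod_Icc_succ_top (by omega : 1 ≤ m + 1), ← mul_assoc]
  have hm : (m:ℝ) ≤ 2*(N:ℝ) - 3 := by
    have : m ≤ 2*N - 3 := by omega
    have := (Nat.cast_le (α := ℝ)).mpr this
    push_cast at this
    have h3 : (3:ℝ) ≤ 2*(N:ℝ) := by linarith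
    calc (m:ℝ) ≤ ((2*N - 3 : ℕ):ℝ) := this
      _ = 2*(N:ℝ) - 3 := by
          rw [Nat.cast_sub (by omega)]; push_cast; ring
  apply mul_lt_of_lt_one_right
  · apply mul_pos
    · apply mul_pos (Real.exp_pos _)
      apply mul_pos two_pos
      apply Real.sinh_pos_iff.mpr
      apply div_pos (by nlinarith) (by linarith)
    · apply Finset.prod_pos
      intro k hk
      simp only [Finset.mem_Icc] at hk
      have hk2 : (k:ℝ) ≤ (m:ℝ) := by exact_mod_cast hk.2
      have hk1 : (1:ℝ) ≤ (k:ℝ) := by exact_mod_cast hk.1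
      apply mul_pos
      apply mul_pos (by norm_num)
      · apply Real.sinh_pos_iff.mpr; apply div_pos (by nlinarith) (by linarith)
      · apply Real.sinh_pos_iff.mpr; apply div_pos (by nlinarith) (by linarith)
  · rw [sinh_prod_eq]
    have hA : (2*((N:ℝ)-1)+1+(((m:ℕ):ℝ)+1)) * ξ / (2*(N:ℝ)) +
        (2*((N:ℝ)-1)+1-(((m:ℕ):ℝ)+1)) * ξ / (2*(N:ℝ)) = (2*(N:ℝ)-1)*ξ/(N:ℝ) := by
      field_simp; ring
    have hB : (2*((N:ℝ)-1)+1+(((m:ℕ):ℝ)+1)) * ξ / (2*(N:ℝ)) -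
        (2*((N:ℝ)-1)+1-(((m:ℕ):ℝ)+1)) * ξ / (2*(N:ℝ)) = ((m:ℝ)+1)*ξ/(N:ℝ) := by
      field_simp; ring
    push_cast
    rw [hA, hB]
    push_cast at h
    have hlt : Real.cosh ((2*(N:ℝ)-1)*ξ/(N:ℝ)) < Real.cosh (2*ξ) := by
      rw [Real.cosh_lt_cosh]
      rw [abs_of_nonneg (div_nonneg (mul_nonneg (by linarith) hξ.le) hn0.le), abs_of_nonneg (by positivity)]
      rw [div_lt_iff₀ hn0]
      nlinarith
    linarith
end

section
/- Let ξ > 0, δ > 0, b ≥ 0 an integer, and f_{d,l} as above. There exists N₀ such that for all N > N₀ and all l with 1 ≤ l ≤ 2N−2 satisfying cosh(lξ/N) < cosh(2ξ) − 1/2 − δ, one has f_{N−1,l−1} < f_{N−1,l}. -/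
lemma cosh_diff_id (a b : ℝ) :
    Real.cosh (a + b) - Real.cosh (a - b) = 2 * Real.sinh a * Real.sinh b := by
  rw [Real.cosh_add, Real.cosh_sub]; ring

theorem stmt5 (ξ : ℝ) (hξ : 0 < ξ) (δ : ℝ) (hδ : 0 < δ) (b : ℕ) :
    ∃ N₀ : ℕ, ∀ N : ℕ, N₀ < N → ∀ l : ℕ, 1 ≤ l → l ≤ 2*N - 2 →
      Real.cosh ((l:ℝ) * ξ / (N:ℝ)) < Real.cosh (2*ξ) - 1/2 - δ →
      f ξ b N (N-1) (l-1) < f ξ b N (N-1) l := by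
  -- Step 0: eventually cosh(2ξ - ξ/N) > cosh(2ξ) - δ
  have h1 : Filter.Tendsto (fun N : ℕ => ξ/(N:ℝ)) Filter.atTop (nhds 0) :=
    Filter.Tendsto.div_atTop tendsto_const_nhds tendsto_natCast_atTop_atTop
  have h2 : Filter.Tendsto (fun N : ℕ => 2*ξ - ξ/(N:ℝ)) Filter.atTop (nhds (2*ξ)) := by
    simpa using tendsto_const_nhds.sub h1
  have hcont : Filter.Tendsto (fun N : ℕ => Real.cosh (2*ξ - ξ/(N:ℝ)))
      Filter.atTop (nhds (Real.cosh (2*ξ))) :=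
    (Real.continuous_cosh.continuousAt.tendsto).comp h2
  have hev := hcont.eventually
    (eventually_gt_nhds (show Real.cosh (2*ξ) - δ < Real.cosh (2*ξ) by linarith))
  obtain ⟨N₀, hN₀⟩ := Filter.eventually_atTop.mp hev
  refine ⟨N₀ + 1, ?_⟩
  intro N hN l hl1 hl2 hcosh
  have hN1 : 1 ≤ N := by omega
  have hNc := hN₀ N (by omega)
  have hNpos : (0:ℝ) < N := by exact_mod_cast Nat.pos_of_ne_zero (by omega)
  have hNne : (N:ℝ) ≠ 0 := ne_of_gt hNpos
  have hdcast : ((N - 1 : ℕ) : ℝ) = (N:ℝ) - 1 := by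
    push_cast [Nat.cast_sub hN1]; ring
  -- bound on l : (l:ℝ) + 2 ≤ 2N
  have hl2' : l + 2 ≤ 2*N := by omega
  have hlR : (l:ℝ) + 2 ≤ 2*(N:ℝ) := by exact_mod_cast hl2'
  have hlR1 : (1:ℝ) ≤ (l:ℝ) := by exact_mod_cast hl1
  -- split the product
  obtain ⟨m, rfl⟩ : ∃ m, l = m + 1 := ⟨l - 1, by omega⟩
  show f ξ b N (N-1) m < f ξ b N (N-1) (m+1)
  push_cast at hlR hlR1
  have hsplit : f ξ b N (N-1) (m+1) = f ξ b N (N-1) m *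
      (4 * Real.sinh ((2*((N-1:ℕ):ℝ)+1+((m:ℝ)+1)) * ξ / (2*(N:ℝ))) *
         Real.sinh ((2*((N-1:ℕ):ℝ)+1-((m:ℝ)+1)) * ξ / (2*(N:ℝ)))) := by
    unfold f
    rw [Finset.prod_Icc_succ_top (M := ℝ) (by omega)]
    push_cast
    ring
  rw [hsplit]
  -- positivity of f at l-1
  have hfpos : 0 < f ξ b N (N-1) m := by
    unfold f
    apply mul_pos
    · apply mul_pos (Real.exp_pos _)
      apply mul_pos two_pos
      apply Real.sinh_pos_iff.2
      apply div_pos _ (by positivity)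
      apply mul_pos _ hξ
      rw [hdcast]; linarith
    · apply Finset.prod_pos
      intro k hk
      obtain ⟨hk1, hk2⟩ := Finset.mem_Icc.mp hk
      have hkR : (k:ℝ) + 1 ≤ (m:ℝ) + 1 := by exact_mod_cast Nat.succ_le_of_lt (by omega)
      have hkpos : (0:ℝ) < k := by exact_mod_cast hk1
      rw [hdcast]
      apply mul_pos
      apply mul_pos four_pos
      · exact Real.sinh_pos_iff.2 (div_pos (mul_pos (by linarith) hξ) (by positivity))
      · exact Real.sinh_pos_iff.2 (div_pos (mul_pos (by linarith) hξ) (by positivity))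
  -- the new factor exceeds 1
  have hfac : 1 < 4 * Real.sinh ((2*((N-1:ℕ):ℝ)+1+((m:ℝ)+1)) * ξ / (2*(N:ℝ))) *
      Real.sinh ((2*((N-1:ℕ):ℝ)+1-((m:ℝ)+1)) * ξ / (2*(N:ℝ))) := by
    rw [hdcast]
    set A := (2*((N:ℝ)-1)+1+((m:ℝ)+1)) * ξ / (2*(N:ℝ)) with hA
    set B := (2*((N:ℝ)-1)+1-((m:ℝ)+1)) * ξ / (2*(N:ℝ)) with hB
    have hid := cosh_diff_id A B
    have eA : A + B = 2*ξ - ξ/(N:ℝ) := by rw [hA, hB]; field_simp; ring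
    have eB : A - B = ((m:ℝ)+1)*ξ/(N:ℝ) := by rw [hA, hB]; field_simp; ring
    rw [eA, eB] at hid
    push_cast at hcosh
    linarith
  calc f ξ b N (N-1) m = f ξ b N (N-1) m * 1 := by ring
    _ < _ := by exact mul_lt_mul_of_pos_left hfac hfpos
end

section
/- Let ξ > κ := (1/2)·arccosh(3/2) be real, b ≥ 0 an integer, and for N ≥ 2 and 0 ≤ d ≤ N−1, 0 ≤ l ≤ 2d define f_{d,l} as above. Define S_N := (−1)^{N−1}·Σ_{d=0}^{N−1} Σ_{l=0}^{2d} (−1)^d f_{d,l}. Then S_N > (1 − e^{−ξ/2})·Σ_{l=0}^{2N−2} f_{N−1,l} > 0. -/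
private lemma sinh_pos' {x : ℝ} (hx : 0 < x) : 0 < Real.sinh x := by
  have : Real.sinh 0 < Real.sinh x := Real.sinh_lt_sinh.2 hx
  simpa using this

private lemma sinh_ratio {a c : ℝ} (hc : 0 < c) (hca : c ≤ a) :
    Real.exp (a - c) * Real.sinh c ≤ Real.sinh a := by
  have e1 : Real.exp (a-c) * Real.exp c = Real.exp a := by
    rw [← Real.exp_add]; ring_nf
  have e2 : Real.exp (a-c) * Real.exp (-c) = Real.exp (a-2*c) := by
    rw [← Real.exp_add]; ring_nf
  have e3 : Real.exp (-a) ≤ Real.exp (a-2*c) := Real.exp_le_exp.2 (by linarith)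
  rw [Real.sinh_eq, Real.sinh_eq]
  nlinarith [e1, e2, e3]

private lemma alt_nonneg (g : ℕ → ℝ) (hdec : ∀ j, g (j+1) ≤ g j) (hpos : ∀ j, 0 ≤ g j) :
    ∀ n, 0 ≤ ∑ j ∈ Finset.range n, (-1:ℝ)^j * g j := by
  intro n
  induction n using Nat.strong_induction_on with
  | _ n ih =>
    match n with
    | 0 => simp
    | 1 => simpa using hpos 0
    | (m+2) =>
      rcases Nat.even_or_odd m with he | ho
      · rw [Finset.sum_range_succ, Finset.sum_range_succ]
        have h1 : (-1:ℝ)^m = 1 := he.neg_one_pow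
        have h2 : (-1:ℝ)^(m+1) = -1 := by rw [pow_succ, h1]; ring
        have h3 := ih m (by omega)
        have h4 := hdec m
        rw [h1, h2]; linarith
      · rw [Finset.sum_range_succ]
        have h2 : (-1:ℝ)^(m+1) = 1 := (Odd.add_one ho).neg_one_pow
        have h3 := ih (m+1) (by omega)
        have h4 := hpos (m+1)
        rw [h2]; linarith

private lemma combine {e1 e2 A B C A' B' C' : ℝ} (h1 : e1 * A ≤ A') (h2 : e2 * B ≤ B')
    (h3 : C ≤ C') (hC : 0 ≤ C) (he2 : 0 ≤ e2) (hB : 0 ≤ B) (hA' : 0 ≤ A') (hB' : 0 ≤ B') :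
    (e1*e2) * (A*B*C) ≤ A'*B'*C' := by
  calc (e1*e2) * (A*B*C) = ((e1*A)*(e2*B))*C := by ring
    _ ≤ (A'*B')*C := mul_le_mul_of_nonneg_right
        (mul_le_mul h1 h2 (mul_nonneg he2 hB) hA') hC
    _ ≤ (A'*B')*C' := mul_le_mul_of_nonneg_left h3 (mul_nonneg hA' hB')
    _ = A'*B'*C' := by ring

private lemma fpos {ξ : ℝ} {b N d l : ℕ} (hξ : 0 < ξ) (hN : 1 ≤ N) (hl : l ≤ 2*d) :
    0 < f ξ b N d l := by
  have hN' : (0:ℝ) < (N:ℝ) := by exact_mod_cast Nat.pos_of_ne_zero (by omega)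
  have hx : (0:ℝ) < ξ / (2*(N:ℝ)) := by positivity
  unfold f
  simp only [mul_div_assoc]
  set x := ξ / (2*(N:ℝ)) with hxdef
  apply mul_pos (mul_pos (Real.exp_pos _) ?_) ?_
  · have : (0:ℝ) < (2*(d:ℝ)+1) * x := by positivity
    have := sinh_pos' this
    linarith
  · apply Finset.prod_pos
    intro k hk
    have hk2 : (k:ℝ) ≤ 2*(d:ℝ) := by
      exact_mod_cast le_trans (Finset.mem_Icc.1 hk).2 hl
    have p1 : 0 < Real.sinh ((2*(d:ℝ)+1+(k:ℝ)) * x) := sinh_pos' (by positivity)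
    have p2 : 0 < Real.sinh ((2*(d:ℝ)+1-(k:ℝ)) * x) :=
      sinh_pos' (mul_pos (by linarith) hx)
    positivity

private lemma fjump {ξ : ℝ} {b N d l : ℕ} (hξ : 0 < ξ) (hN : 1 ≤ N) (hl : l ≤ 2*d) :
    Real.exp ((2*(d:ℝ)+4) * (ξ / (2*(N:ℝ)))) * f ξ b N d l ≤ f ξ b N (d+1) l := by
  have hN' : (0:ℝ) < (N:ℝ) := by exact_mod_cast Nat.pos_of_ne_zero (by omega)
  have hx : (0:ℝ) < ξ / (2*(N:ℝ)) := by positivity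
  unfold f
  push_cast
  simp only [mul_div_assoc]
  set x := ξ / (2*(N:ℝ)) with hxdef
  simp only [show (2*((d:ℝ)+1)+1) = 2*(d:ℝ)+3 from by ring]
  rw [show Real.exp ((2*(d:ℝ)+4)*x) = Real.exp ((2*(d:ℝ)+2)*x) * Real.exp (2*x) from by
    rw [← Real.exp_add]; congr 1; ring]
  have hb : (0:ℝ) ≤ (b:ℝ) := Nat.cast_nonneg b
  have hd : (0:ℝ) ≤ (d:ℝ) := Nat.cast_nonneg d
  have hB : 0 < Real.sinh ((2*(d:ℝ)+1) * x) := sinh_pos' (by positivity)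
  have hB' : 0 < Real.sinh ((2*(d:ℝ)+3) * x) := sinh_pos' (by positivity)
  apply combine
  · rw [← Real.exp_add]
    apply Real.exp_le_exp.2
    nlinarith [mul_nonneg (mul_nonneg hb hd) hx.le, mul_nonneg hb hx.le]
  · have hs := sinh_ratio (show 0 < (2*(d:ℝ)+1)*x by positivity)
      (show (2*(d:ℝ)+1)*x ≤ (2*(d:ℝ)+3)*x by nlinarith [hx.le])
    rw [show (2*(d:ℝ)+3)*x - (2*(d:ℝ)+1)*x = 2*x from by ring] at hs
    nlinarith [hs]
  · apply Finset.prod_le_prod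
    · intro k hk
      have hk2 : (k:ℝ) ≤ 2*(d:ℝ) := by
        exact_mod_cast le_trans (Finset.mem_Icc.1 hk).2 hl
      have p1 : 0 < Real.sinh ((2*(d:ℝ)+1+(k:ℝ)) * x) := sinh_pos' (by positivity)
      have p2 : 0 < Real.sinh ((2*(d:ℝ)+1-(k:ℝ)) * x) :=
        sinh_pos' (mul_pos (by linarith) hx)
      positivity
    · intro k hk
      have hk2 : (k:ℝ) ≤ 2*(d:ℝ) := by
        exact_mod_cast le_trans (Finset.mem_Icc.1 hk).2 hl
      have p1 : 0 < Real.sinh ((2*(d:ℝ)+1+(k:ℝ)) * x) := sinh_pos' (by positivity)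
      have p2 : 0 < Real.sinh ((2*(d:ℝ)+1-(k:ℝ)) * x) :=
        sinh_pos' (mul_pos (by linarith) hx)
      have f1 : Real.sinh ((2*(d:ℝ)+1+(k:ℝ)) * x) ≤ Real.sinh ((2*(d:ℝ)+3+(k:ℝ)) * x) :=
        Real.sinh_le_sinh.2 (by nlinarith [hx.le])
      have f2 : Real.sinh ((2*(d:ℝ)+1-(k:ℝ)) * x) ≤ Real.sinh ((2*(d:ℝ)+3-(k:ℝ)) * x) :=
        Real.sinh_le_sinh.2 (by nlinarith [hx.le])
      nlinarith [mul_le_mul f1 f2 p2.le (le_trans p1.le f1)]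
  · apply Finset.prod_nonneg
    intro k hk
    have hk2 : (k:ℝ) ≤ 2*(d:ℝ) := by
      exact_mod_cast le_trans (Finset.mem_Icc.1 hk).2 hl
    have p1 : 0 < Real.sinh ((2*(d:ℝ)+1+(k:ℝ)) * x) := sinh_pos' (by positivity)
    have p2 : 0 < Real.sinh ((2*(d:ℝ)+1-(k:ℝ)) * x) :=
      sinh_pos' (mul_pos (by linarith) hx)
    positivity
  · exact (Real.exp_pos _).le
  · linarith
  · exact (Real.exp_pos _).le
  · linarith

private lemma fmono {ξ : ℝ} {b N d l : ℕ} (hξ : 0 < ξ) (hN : 1 ≤ N) (hl : l ≤ 2*d) :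
    f ξ b N d l < f ξ b N (d+1) l := by
  have hN' : (0:ℝ) < (N:ℝ) := by exact_mod_cast Nat.pos_of_ne_zero (by omega)
  have hx : (0:ℝ) < ξ / (2*(N:ℝ)) := by positivity
  have h1 : f ξ b N d l < Real.exp ((2*(d:ℝ)+4) * (ξ / (2*(N:ℝ)))) * f ξ b N d l := by
    have he : 1 < Real.exp ((2*(d:ℝ)+4) * (ξ / (2*(N:ℝ)))) := by
      rw [show (1:ℝ) = Real.exp 0 from (Real.exp_zero).symm]
      apply Real.exp_lt_exp.2
      positivity
    nlinarith [fpos (b := b) hξ hN hl]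
  exact lt_of_lt_of_le h1 (fjump hξ hN hl)

private noncomputable def T (ξ : ℝ) (b N d : ℕ) : ℝ := ∑ l ∈ Finset.range (2*d+1), f ξ b N d l

private lemma Tpos {ξ : ℝ} {b N : ℕ} (hξ : 0 < ξ) (hN : 1 ≤ N) (d : ℕ) : 0 < T ξ b N d := by
  apply Finset.sum_pos
  · intro l hl
    exact fpos hξ hN (by have := Finset.mem_range.1 hl; omega)
  · exact ⟨0, by simp⟩

private lemma Tmono {ξ : ℝ} {b N : ℕ} (hξ : 0 < ξ) (hN : 1 ≤ N) (d : ℕ) :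
    T ξ b N d < T ξ b N (d+1) := by
  unfold T
  calc ∑ l ∈ Finset.range (2*d+1), f ξ b N d l
      < ∑ l ∈ Finset.range (2*d+1), f ξ b N (d+1) l := by
        apply Finset.sum_lt_sum_of_nonempty ⟨0, by simp⟩
        intro l hl
        exact fmono hξ hN (by have := Finset.mem_range.1 hl; omega)
    _ ≤ ∑ l ∈ Finset.range (2*(d+1)+1), f ξ b N (d+1) l := by
        apply Finset.sum_le_sum_of_subset_of_nonneg
        · exact Finset.range_subset_range.2 (by omega)
        · intro l hl _
          exact (fpos hξ hN (by have := Finset.mem_range.1 hl; omega)).le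

private lemma Tmono' {ξ : ℝ} {b N : ℕ} (hξ : 0 < ξ) (hN : 1 ≤ N) :
    Monotone (T ξ b N) :=
  monotone_nat_of_le_succ (fun d => (Tmono hξ hN d).le)

private lemma Tjump {ξ : ℝ} {b N : ℕ} (hξ : 0 < ξ) (hN : 2 ≤ N) :
    Real.exp (ξ/2) * T ξ b N (N-2) < T ξ b N (N-1) := by
  have hN' : (0:ℝ) < (N:ℝ) := by exact_mod_cast Nat.pos_of_ne_zero (by omega)
  have hc : (2*((N-2:ℕ):ℝ)+4) * (ξ / (2*(N:ℝ))) = ξ := by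
    rw [Nat.cast_sub hN]
    push_cast
    field_simp
    ring
  have key : ∀ l ≤ 2*(N-2), Real.exp (ξ/2) * f ξ b N (N-2) l < f ξ b N (N-1) l := by
    intro l hl
    have h1 := fjump (b := b) hξ (by omega : 1 ≤ N) hl
    rw [hc] at h1
    rw [show N - 2 + 1 = N - 1 from by omega] at h1
    have h2 : Real.exp (ξ/2) < Real.exp ξ := Real.exp_lt_exp.2 (by linarith)
    nlinarith [fpos (b := b) hξ (by omega : 1 ≤ N) hl, h1, h2]
  unfold T
  rw [Finset.mul_sum]
  calc ∑ l ∈ Finset.range (2*(N-2)+1), Real.exp (ξ/2) * f ξ b N (N-2) l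
      < ∑ l ∈ Finset.range (2*(N-2)+1), f ξ b N (N-1) l := by
        apply Finset.sum_lt_sum_of_nonempty ⟨0, by simp⟩
        intro l hl
        exact key l (by have := Finset.mem_range.1 hl; omega)
    _ ≤ ∑ l ∈ Finset.range (2*(N-1)+1), f ξ b N (N-1) l := by
        apply Finset.sum_le_sum_of_subset_of_nonneg
        · exact Finset.range_subset_range.2 (by omega)
        · intro l hl _
          exact (fpos hξ (by omega : 1 ≤ N) (by have := Finset.mem_range.1 hl; omega)).le

theorem stmt18 (ξ : ℝ) (hξ : kappa < ξ) (b N : ℕ) (hN : 2 ≤ N) :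
    (1 - Real.exp (-ξ/2)) * (∑ l ∈ Finset.range (2*N - 1), f ξ b N (N-1) l) <
      (-1:ℝ)^(N-1) *
        ∑ d ∈ Finset.range N, ∑ l ∈ Finset.range (2*d + 1), (-1:ℝ)^d * f ξ b N d l ∧
    0 < (1 - Real.exp (-ξ/2)) * ∑ l ∈ Finset.range (2*N - 1), f ξ b N (N-1) l := by
  have hk : 0 < kappa := by
    unfold kappa arcosh
    have h1 : (0:ℝ) < Real.log (3/2 + Real.sqrt ((3/2:ℝ)^2 - 1)) :=
      Real.log_pos (by nlinarith [Real.sqrt_nonneg ((3/2:ℝ)^2 - 1)])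
    linarith
  have hξ0 : 0 < ξ := lt_trans hk hξ
  have hN1 : 1 ≤ N := by omega
  have hsum_eq : ∑ l ∈ Finset.range (2*N-1), f ξ b N (N-1) l = T ξ b N (N-1) := by
    unfold T
    rw [show 2*N-1 = 2*(N-1)+1 from by omega]
  have hr : Real.exp (-ξ/2) < 1 := Real.exp_lt_one_iff.2 (by linarith)
  constructor
  · -- main inequality
    have hS1 : ∑ d ∈ Finset.range N, ∑ l ∈ Finset.range (2*d+1), (-1:ℝ)^d * f ξ b N d l
        = ∑ d ∈ Finset.range N, (-1:ℝ)^d * T ξ b N d :=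
      Finset.sum_congr rfl (fun d _ => by rw [← Finset.mul_sum]; rfl)
    have hrefl := Finset.sum_range_reflect (fun d => (-1:ℝ)^d * T ξ b N d) N
    have hsign : ∀ j < N, (-1:ℝ)^(N-1) * ((-1:ℝ)^(N-1-j) * T ξ b N (N-1-j))
        = (-1:ℝ)^j * T ξ b N (N-1-j) := by
      intro j hj
      have hp : (-1:ℝ)^((N-1)+(N-1-j)) = (-1:ℝ)^j := by
        rw [show (N-1)+(N-1-j) = 2*(N-1-j) + j from by omega, pow_add, pow_mul]
        simp
      rw [← mul_assoc, ← pow_add, hp]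
    have hS2 : (-1:ℝ)^(N-1) * ∑ d ∈ Finset.range N, (-1:ℝ)^d * T ξ b N d
        = ∑ j ∈ Finset.range N, (-1:ℝ)^j * T ξ b N (N-1-j) := by
      rw [← hrefl, Finset.mul_sum]
      exact Finset.sum_congr rfl (fun j hj => hsign j (Finset.mem_range.1 hj))
    rw [hS1, hS2, hsum_eq]
    obtain ⟨K, hK⟩ : ∃ K, N = K + 2 := ⟨N-2, by omega⟩
    subst hK
    rw [Finset.sum_range_succ' _ (K+1), Finset.sum_range_succ' _ K]
    have htail : 0 ≤ ∑ j ∈ Finset.range K, (-1:ℝ)^(j+1+1) * T ξ b (K+2) (K+2-1-(j+1+1)) := by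
      have := alt_nonneg (fun j => T ξ b (K+2) (K-1-j))
        (fun j => Tmono' hξ0 hN1 (by omega : K-1-(j+1) ≤ K-1-j))
        (fun j => (Tpos hξ0 hN1 _).le) K
      refine le_trans this (le_of_eq (Finset.sum_congr rfl (fun j hj => ?_)))
      rw [show (-1:ℝ)^(j+1+1) = (-1:ℝ)^j * (-1)^2 from by rw [← pow_add], show K+2-1-(j+1+1) = K-1-j from by omega]
      ring
    have hjump := Tjump (b := b) hξ0 (by omega : 2 ≤ K+2)
    have hkey : T ξ b (K+2) (K+2-2) < Real.exp (-ξ/2) * T ξ b (K+2) (K+2-1) := by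
      have hepos : 0 < Real.exp (-ξ/2) := Real.exp_pos _
      have := mul_lt_mul_of_pos_left hjump hepos
      rw [← mul_assoc, ← Real.exp_add] at this
      simp only [show -ξ/2 + ξ/2 = 0 from by ring, Real.exp_zero, one_mul] at this
      exact this
    simp only [pow_zero, pow_one, one_mul]
    rw [show K+2-1-0 = K+2-1 from by omega, show K+2-1-1 = K+2-2 from by omega]
    have hTpos := Tpos (b := b) (N := K+2) hξ0 hN1 (K+2-1)
    nlinarith [htail, hkey, hTpos]
  · apply mul_pos (by linarith)
    rw [hsum_eq]
    exact Tpos hξ0 hN1 _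
end
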